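/- Let (λ_j)_{j≥0} be strictly increasing with λ_0 = 0, λ_j ≥ 1 for j ≥ 1, λ_j → ∞, and ℓ = sup_j (λ_{j+1} - λ_j) < ∞. For u ≥ 1 let j_u be the unique index with λ_{j_u - 1} ≤ u < λ_{j_u}, and define φ(u) = Σ_{j=2}^{j_u - 1} (λ_j - λ_{j-1})/λ_{j-1}. Then for every u ≥ 1, φ(u) ≥ log u - log λ_1 - ℓ. -/
import Mathlib


open Finset Filter

lemma aux_telescope (lam : ℕ → ℝ) (hmono : StrictMono lam)
    (h1 : ∀ j, 1 ≤ j → 1 ≤ lam j) :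
    ∀ n, 1 ≤ n →
      Real.log (lam n) - Real.log (lam 1) ≤
        ∑ j ∈ Icc 2 n, (lam j - lam (j - 1)) / lam (j - 1) := by
  intro n hn
  induction n with
  | zero => omega
  | succ n ih =>
    rcases Nat.eq_or_lt_of_le hn with h | h
    · simp [← h]
    · have hn1 : 1 ≤ n := by omega
      have h2 : 2 ≤ n + 1 := by omega
      rw [Finset.sum_Icc_succ_top h2]
      have hpos : (0:ℝ) < lam n := lt_of_lt_of_le one_pos (h1 n hn1)
      have hpos' : (0:ℝ) < lam (n+1) := hpos.trans (hmono (by omega))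
      have key : Real.log (lam (n+1)) - Real.log (lam n) ≤
          (lam (n+1) - lam n) / lam n := by
        rw [← Real.log_div hpos'.ne' hpos.ne']
        have := Real.log_le_sub_one_of_pos (div_pos hpos' hpos)
        calc Real.log (lam (n+1) / lam n) ≤ lam (n+1) / lam n - 1 := this
          _ = (lam (n+1) - lam n) / lam n := by field_simp
      have := ih hn1
      simp only [Nat.add_sub_cancel]
      linarith

theorem stmt9 (lam : ℕ → ℝ) (hmono : StrictMono lam) (h0 : lam 0 = 0)
    (h1 : ∀ j, 1 ≤ j → 1 ≤ lam j) (htop : Tendsto lam atTop atTop)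
    (ℓ : ℝ) (hgap : ∀ j, lam (j + 1) - lam j ≤ ℓ)
    (ju : ℝ → ℕ) (hju : ∀ u : ℝ, 1 ≤ u → 1 ≤ ju u ∧ lam (ju u - 1) ≤ u ∧ u < lam (ju u))
    (φ : ℝ → ℝ)
    (hφ : ∀ u, φ u = ∑ j ∈ Icc 2 (ju u - 1), (lam j - lam (j - 1)) / lam (j - 1)) :
    ∀ u : ℝ, 1 ≤ u → Real.log u - Real.log (lam 1) - ℓ ≤ φ u := by
  intro u hu
  obtain ⟨hju1, hlow, hhigh⟩ := hju u hu
  have hl1 : 1 ≤ lam 1 := h1 1 le_rfl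
  have hℓ1 : (1:ℝ) ≤ ℓ := by have := hgap 0; rw [h0] at this; linarith
  rw [hφ]
  rcases Nat.eq_or_lt_of_le hju1 with h | h
  · -- ju u = 1
    rw [← h]
    simp only [Nat.sub_self]
    have : Real.log u ≤ Real.log (lam 1) := by
      apply Real.log_le_log (by linarith)
      rw [← h] at hhigh; exact hhigh.le
    have : ∑ j ∈ Icc 2 0, (lam j - lam (j - 1)) / lam (j - 1) = 0 := by simp
    rw [this]
    linarith
  · set n := ju u - 1 with hn
    have hjun : ju u = n + 1 := by omega
    have hn1 : 1 ≤ n := by omega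
    have htel := aux_telescope lam hmono h1 n hn1
    have hposn : (1:ℝ) ≤ lam n := h1 n hn1
    -- log u ≤ log (lam n) + ℓ
    have hub : u ≤ lam n + ℓ := by
      have hhigh' : u < lam (n + 1) := by
        have hq : n + 1 = ju u := by omega
        rw [hq]; exact hhigh
      have := hgap n
      linarith
    have hlog : Real.log u ≤ Real.log (lam n) + ℓ := by
      have hup : (0:ℝ) < u := by linarith
      have hln : (0:ℝ) < lam n := by linarith
      have hq : Real.log u - Real.log (lam n) ≤ u / lam n - 1 := by
        rw [← Real.log_div hup.ne' hln.ne']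
        exact Real.log_le_sub_one_of_pos (div_pos hup hln)
      have : u / lam n - 1 ≤ ℓ := by
        rw [div_sub_one hln.ne', div_le_iff₀ hln]
        nlinarith
      linarith
    linarith
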